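/- In the Artin presentation of B_N (N ≥ 3), the element x = σ₂²σ₁⁻² has minimal Artin word length ℓ(x) = 4 and rational Artin length ℓ_R(x) = 8; in particular ℓ_R(x) = 2·ℓ(x). -/

import Mathlib

/-- Minimal length of `x` as a word in the alphabet `A ∪ A⁻¹`. -/
noncomputable def minLen {G : Type*} [Group G] (A : Set G) (x : G) : ℕ :=
  sInf {n | ∃ L : List G, (∀ g ∈ L, g ∈ A ∨ g⁻¹ ∈ A) ∧ L.prod = x ∧ L.length = n}

/-- The braid relations on `N` strands (generators indexed by `Fin (N-1)`,
generator `i` representing `σ_{i+1}`). -/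
def braidRels (N : ℕ) : Set (FreeGroup (Fin (N - 1))) :=
  {r | (∃ i j : Fin (N - 1), (i : ℕ) + 1 = (j : ℕ) ∧
          r = FreeGroup.of i * FreeGroup.of j * FreeGroup.of i *
              (FreeGroup.of j * FreeGroup.of i * FreeGroup.of j)⁻¹) ∨
       (∃ i j : Fin (N - 1), (i : ℕ) + 2 ≤ (j : ℕ) ∧
          r = FreeGroup.of i * FreeGroup.of j * (FreeGroup.of j * FreeGroup.of i)⁻¹)}

/-- The braid group `B_N` with Artin's presentation. -/
abbrev BraidGroup (N : ℕ) := PresentedGroup (braidRels N)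

/-- The Artin generator `σ_i` (1-based index, `1 ≤ i ≤ N-1`). -/
noncomputable def sigma (N : ℕ) (i : ℕ) : BraidGroup N :=
  if h : i - 1 < N - 1 then PresentedGroup.of (⟨i - 1, h⟩ : Fin (N - 1)) else 1

/-- The set of Artin generators of `B_N`. -/
def artinGens (N : ℕ) : Set (BraidGroup N) :=
  {x | ∃ i : ℕ, 1 ≤ i ∧ i ≤ N - 1 ∧ x = sigma N i}

/-- Minimal length of `x` as a positive word in the alphabet `A`. -/
noncomputable def posLen {G : Type*} [Group G] (A : Set G) (x : G) : ℕ :=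
  sInf {n | ∃ L : List G, (∀ g ∈ L, g ∈ A) ∧ L.prod = x ∧ L.length = n}

namespace BraidAux

open Multiplicative Equiv SemidirectProduct

variable {N : ℕ}

/-- crossing-count vectors -/
abbrev V (N : ℕ) := Fin N × Fin N → Multiplicative ℤ

/-- permutation action on vectors -/
def permAut (N : ℕ) : Equiv.Perm (Fin N) →* MulAut (V N) where
  toFun π :=
    { toFun := fun f p => f (π⁻¹ p.1, π⁻¹ p.2)
      invFun := fun f p => f (π p.1, π p.2)
      left_inv := fun f => by funext p; simp
      right_inv := fun f => by funext p; simp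
      map_mul' := fun f g => rfl }
  map_one' := by ext f p; simp
  map_mul' π ρ := by ext f p; simp

abbrev GG (N : ℕ) := V N ⋊[permAut N] Equiv.Perm (Fin N)

/-- symmetric indicator vector of the pair {a,b} -/
def dl (a b : Fin N) : V N := fun p => if p = (a, b) ∨ p = (b, a) then ofAdd 1 else 1

lemma permAut_dl (π : Equiv.Perm (Fin N)) (a b : Fin N) :
    permAut N π (dl a b) = dl (π a) (π b) := by
  funext p
  obtain ⟨x, y⟩ := p
  simp only [permAut, MonoidHom.coe_mk, OneHom.coe_mk, MulEquiv.coe_mk, Equiv.coe_fn_mk, dl,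
    Prod.mk.injEq]
  congr 1
  simp [Equiv.Perm.inv_eq_iff_eq, Equiv.symm_apply_eq]

lemma dl_comm (a b : Fin N) : dl a b = dl b a := by
  funext p; simp [dl, or_comm]

/-- strand embeddings -/
def fe (i : Fin (N - 1)) : Fin N := ⟨i.1, by have := i.2; omega⟩
def fe' (i : Fin (N - 1)) : Fin N := ⟨i.1 + 1, by have := i.2; omega⟩

/-- image of the `i`-th Artin generator -/
def gen (i : Fin (N - 1)) : GG N := ⟨dl (fe i) (fe' i), Equiv.swap (fe i) (fe' i)⟩

lemma mk_mul (n₁ n₂ : V N) (g₁ g₂ : Equiv.Perm (Fin N)) :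
    (⟨n₁, g₁⟩ : GG N) * ⟨n₂, g₂⟩ = ⟨n₁ * permAut N g₁ n₂, g₁ * g₂⟩ := rfl

lemma braid_gg (a b c : Fin N) (hab : a ≠ b) (hbc : b ≠ c) (hac : a ≠ c) :
    (⟨dl a b, Equiv.swap a b⟩ : GG N) * ⟨dl b c, Equiv.swap b c⟩ * ⟨dl a b, Equiv.swap a b⟩
      = ⟨dl b c, Equiv.swap b c⟩ * ⟨dl a b, Equiv.swap a b⟩ * ⟨dl b c, Equiv.swap b c⟩ := by
  have hperm : Equiv.swap a b * Equiv.swap b c * Equiv.swap a b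
      = Equiv.swap b c * Equiv.swap a b * Equiv.swap b c := by
    have h1 := Equiv.swap_mul_swap_mul_swap (x := c) (y := b) (z := a)
      (Ne.symm hbc) (Ne.symm hac)
    have h2 := Equiv.swap_mul_swap_mul_swap (x := a) (y := b) (z := c) hab hac
    rw [Equiv.swap_comm b a, Equiv.swap_comm c b] at h1
    rw [h1, h2, Equiv.swap_comm c a]
  have e1 : Equiv.swap a b b = a := Equiv.swap_apply_right a b
  have e2 : Equiv.swap a b c = c := Equiv.swap_apply_of_ne_of_ne (Ne.symm hac) (Ne.symm hbc)
  have e3 : Equiv.swap b c a = a := Equiv.swap_apply_of_ne_of_ne hab hac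
  have e4 : Equiv.swap b c b = c := Equiv.swap_apply_left b c
  have e5 : Equiv.swap a b a = b := Equiv.swap_apply_left a b
  have e6 : Equiv.swap b c c = b := Equiv.swap_apply_right b c
  refine SemidirectProduct.ext ?_ ?_
  · show dl a b * permAut N (Equiv.swap a b) (dl b c)
        * permAut N (Equiv.swap a b * Equiv.swap b c) (dl a b)
      = dl b c * permAut N (Equiv.swap b c) (dl a b)
        * permAut N (Equiv.swap b c * Equiv.swap a b) (dl b c)
    rw [map_mul, map_mul, MulAut.mul_apply, MulAut.mul_apply]
    simp only [permAut_dl]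
    simp only [e1, e2, e3, e4, e5, e6]
    simp only [mul_comm, mul_left_comm]
  · exact hperm

lemma comm_gg (a b c d : Fin N) (hca : c ≠ a) (hcb : c ≠ b) (hda : d ≠ a) (hdb : d ≠ b) :
    (⟨dl a b, Equiv.swap a b⟩ : GG N) * ⟨dl c d, Equiv.swap c d⟩
      = ⟨dl c d, Equiv.swap c d⟩ * ⟨dl a b, Equiv.swap a b⟩ := by
  have e1 : Equiv.swap a b c = c := Equiv.swap_apply_of_ne_of_ne hca hcb
  have e2 : Equiv.swap a b d = d := Equiv.swap_apply_of_ne_of_ne hda hdb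
  have e3 : Equiv.swap c d a = a := Equiv.swap_apply_of_ne_of_ne (Ne.symm hca) (Ne.symm hda)
  have e4 : Equiv.swap c d b = b := Equiv.swap_apply_of_ne_of_ne (Ne.symm hcb) (Ne.symm hdb)
  refine SemidirectProduct.ext ?_ ?_
  · show dl a b * permAut N (Equiv.swap a b) (dl c d)
      = dl c d * permAut N (Equiv.swap c d) (dl a b)
    rw [permAut_dl, permAut_dl, e1, e2, e3, e4, mul_comm]
  · show Equiv.swap a b * Equiv.swap c d = Equiv.swap c d * Equiv.swap a b
    rw [Equiv.mul_swap_eq_swap_mul, e1, e2]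

lemma gen_relations'  : True := trivial

lemma gen_relations : ∀ r ∈ braidRels N, FreeGroup.lift (gen (N := N)) r = 1 := by
  rintro r (⟨i, j, hij, rfl⟩ | ⟨i, j, hij, rfl⟩) <;>
    simp only [map_mul, map_inv, FreeGroup.lift_apply_of, mul_inv_eq_one]
  · -- adjacent braid relation
    have hj : fe j = fe' i := by simp [fe, fe', Fin.ext_iff, ← hij]
    have hj' : fe' j = (⟨(i : ℕ) + 2, by have := j.2; omega⟩ : Fin N) := by
      simp [fe', Fin.ext_iff, ← hij]
    have hab : fe i ≠ fe' i := by simp [fe, fe', Fin.ext_iff]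
    have hbc : fe' i ≠ (⟨(i : ℕ) + 2, by have := j.2; omega⟩ : Fin N) := by
      simp [fe', Fin.ext_iff]
    have hac : fe i ≠ (⟨(i : ℕ) + 2, by have := j.2; omega⟩ : Fin N) := by
      simp [fe, Fin.ext_iff]
    show gen i * gen j * gen i = gen j * gen i * gen j
    rw [gen, gen, hj, hj']
    exact braid_gg _ _ _ hab hbc hac
  · -- far commutation
    have h1 : fe j ≠ fe i := by simp [fe, Fin.ext_iff]; omega
    have h2 : fe j ≠ fe' i := by simp [fe, fe', Fin.ext_iff]; omega
    have h3 : fe' j ≠ fe i := by simp [fe, fe', Fin.ext_iff]; omega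
    have h4 : fe' j ≠ fe' i := by simp [fe', Fin.ext_iff]; omega
    show gen i * gen j = gen j * gen i
    rw [gen, gen]
    exact comm_gg _ _ _ _ h1 h2 h3 h4

/-- the linking/permutation representation -/
def ρ (N : ℕ) : BraidGroup N →* GG N := PresentedGroup.toGroup gen_relations

@[simp] lemma ρ_of (i : Fin (N - 1)) : ρ N (PresentedGroup.of i) = gen i :=
  PresentedGroup.toGroup.of gen_relations

/-- exponent-sum homomorphism -/
def E (N : ℕ) : BraidGroup N →* Multiplicative ℤ :=
  PresentedGroup.toGroup (f := fun _ => ofAdd (1 : ℤ))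
    (by
      rintro r (⟨i, j, hij, rfl⟩ | ⟨i, j, hij, rfl⟩) <;>
        simp only [map_mul, map_inv, FreeGroup.lift_apply_of, mul_inv_eq_one])

@[simp] lemma E_of (i : Fin (N - 1)) : E N (PresentedGroup.of i) = ofAdd (1 : ℤ) :=
  PresentedGroup.toGroup.of _

/-- mod-2 exponent-sum homomorphism -/
def E2 (N : ℕ) : BraidGroup N →* Multiplicative (ZMod 2) :=
  PresentedGroup.toGroup (f := fun _ => ofAdd (1 : ZMod 2))
    (by
      rintro r (⟨i, j, hij, rfl⟩ | ⟨i, j, hij, rfl⟩) <;>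
        simp only [map_mul, map_inv, FreeGroup.lift_apply_of, mul_inv_eq_one])

@[simp] lemma E2_of (i : Fin (N - 1)) : E2 N (PresentedGroup.of i) = ofAdd (1 : ZMod 2) :=
  PresentedGroup.toGroup.of _

/-- entry of the crossing-vector -/
def val (g : GG N) (p : Fin N × Fin N) : ℤ := toAdd (g.left p)

lemma val_mul (g h : GG N) (p : Fin N × Fin N) :
    val (g * h) p = val g p + val h (g.right⁻¹ p.1, g.right⁻¹ p.2) := rfl

lemma val_inv (g : GG N) (p : Fin N × Fin N) :
    val g⁻¹ p = -val g (g.right p.1, g.right p.2) := by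
  show toAdd (g⁻¹.left p) = _
  rw [SemidirectProduct.inv_left]
  rfl

@[simp] lemma val_one (p : Fin N × Fin N) : val (1 : GG N) p = 0 := rfl

lemma val_mk (d : V N) (π : Equiv.Perm (Fin N)) (p : Fin N × Fin N) :
    val (⟨d, π⟩ : GG N) p = toAdd (d p) := rfl

lemma val_dl (a b : Fin N) (π : Equiv.Perm (Fin N)) (p : Fin N × Fin N) :
    val (⟨dl a b, π⟩ : GG N) p = if p = (a, b) ∨ p = (b, a) then 1 else 0 := by
  rw [val_mk, dl]
  split <;> rfl

lemma sigma_eq {i : ℕ} (h1 : 1 ≤ i) (h2 : i ≤ N - 1) :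
    sigma N i = PresentedGroup.of (⟨i - 1, by omega⟩ : Fin (N - 1)) := by
  rw [sigma, dif_pos]

lemma ρ_sigma {i : ℕ} (h1 : 1 ≤ i) (h2 : i ≤ N - 1) :
    ρ N (sigma N i) = ⟨dl ⟨i - 1, by omega⟩ ⟨i, by omega⟩,
      Equiv.swap ⟨i - 1, by omega⟩ ⟨i, by omega⟩⟩ := by
  rw [sigma_eq h1 h2, ρ_of, gen]
  have hfe : fe (⟨i - 1, by omega⟩ : Fin (N - 1)) = (⟨i - 1, by omega⟩ : Fin N) := by
    simp [fe]
  have hfe' : fe' (⟨i - 1, by omega⟩ : Fin (N - 1)) = (⟨i, by omega⟩ : Fin N) := by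
    simp only [fe', Fin.ext_iff]
    omega
  rw [hfe, hfe']

lemma E_sigma {i : ℕ} (h1 : 1 ≤ i) (h2 : i ≤ N - 1) :
    E N (sigma N i) = ofAdd (1 : ℤ) := by
  rw [sigma_eq h1 h2, E_of]

lemma E2_sigma {i : ℕ} (h1 : 1 ≤ i) (h2 : i ≤ N - 1) :
    E2 N (sigma N i) = ofAdd (1 : ZMod 2) := by
  rw [sigma_eq h1 h2, E2_of]

lemma mem_gens_ρ {g : BraidGroup N} (hg : g ∈ artinGens N) :
    ∃ a b : Fin N, ∃ π : Equiv.Perm (Fin N), ρ N g = ⟨dl a b, π⟩ := by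
  obtain ⟨i, h1, h2, rfl⟩ := hg
  exact ⟨_, _, _, ρ_sigma h1 h2⟩

lemma val_gen_nonneg {g : BraidGroup N} (hg : g ∈ artinGens N) (p : Fin N × Fin N) :
    0 ≤ val (ρ N g) p := by
  obtain ⟨a, b, π, h⟩ := mem_gens_ρ hg
  rw [h, val_dl]
  split <;> omega

lemma val_gen_le_one {g : BraidGroup N} (hg : g ∈ artinGens N) (p : Fin N × Fin N) :
    val (ρ N g) p ≤ 1 := by
  obtain ⟨a, b, π, h⟩ := mem_gens_ρ hg
  rw [h, val_dl]
  split <;> omega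

lemma val_list_nonneg (L : List (BraidGroup N)) (hL : ∀ g ∈ L, g ∈ artinGens N)
    (p : Fin N × Fin N) : 0 ≤ val (ρ N L.prod) p := by
  induction L generalizing p with
  | nil => simp [val_one]
  | cons g L ih =>
      rw [List.prod_cons, map_mul, val_mul]
      have h1 := val_gen_nonneg (hL g (by simp)) p
      have h2 := ih (fun g hg => hL g (by simp [hg]))
        ((ρ N g).right⁻¹ p.1, (ρ N g).right⁻¹ p.2)
      omega

lemma val_closure_nonneg {m : BraidGroup N} (hm : m ∈ Submonoid.closure (artinGens N))
    (p : Fin N × Fin N) : 0 ≤ val (ρ N m) p := by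
  obtain ⟨L, hL, rfl⟩ := Submonoid.exists_list_of_mem_closure hm
  exact val_list_nonneg L hL p

lemma val_leading {i : ℕ} (h1 : 1 ≤ i) (h2 : i ≤ N - 1) {m : BraidGroup N}
    (hm : m ∈ Submonoid.closure (artinGens N)) (q1 q2 : Fin N)
    (hq1 : (q1 : ℕ) = i - 1) (hq2 : (q2 : ℕ) = i) :
    1 ≤ val (ρ N (sigma N i * m)) (q1, q2) := by
  rw [map_mul, val_mul]
  dsimp only
  have h3 : val (ρ N (sigma N i)) (q1, q2) = 1 := by
    rw [ρ_sigma h1 h2, val_dl,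
      if_pos (Or.inl (by simp [Prod.ext_iff, Fin.ext_iff, hq1, hq2]))]
  have h4 := val_closure_nonneg hm
    ((ρ N (sigma N i)).right⁻¹ q1, (ρ N (sigma N i)).right⁻¹ q2)
  omega

lemma E_list (L : List (BraidGroup N)) (hL : ∀ g ∈ L, g ∈ artinGens N) :
    E N L.prod = ofAdd (L.length : ℤ) := by
  induction L with
  | nil => simp
  | cons g L ih =>
      obtain ⟨i, h1, h2, rfl⟩ := hL g (by simp)
      rw [List.prod_cons, map_mul, E_sigma h1 h2, ih (fun g hg => hL g (by simp [hg]))]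
      rw [← ofAdd_add]
      congr 1
      push_cast [List.length_cons]
      ring

lemma neg_one_zmod2 : (ofAdd (1 : ZMod 2))⁻¹ = ofAdd (1 : ZMod 2) := by decide

lemma E2_letter {g : BraidGroup N} (hg : g ∈ artinGens N ∨ g⁻¹ ∈ artinGens N) :
    E2 N g = ofAdd (1 : ZMod 2) := by
  rcases hg with hg | hg
  · obtain ⟨i, h1, h2, rfl⟩ := hg
    exact E2_sigma h1 h2
  · obtain ⟨i, h1, h2, hgi⟩ := hg
    have : E2 N g⁻¹ = ofAdd (1 : ZMod 2) := by rw [hgi]; exact E2_sigma h1 h2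
    rw [map_inv] at this
    rw [← inv_inv (E2 N g), this, neg_one_zmod2]

lemma E2_list (L : List (BraidGroup N)) (hL : ∀ g ∈ L, g ∈ artinGens N ∨ g⁻¹ ∈ artinGens N) :
    E2 N L.prod = ofAdd ((L.length : ZMod 2)) := by
  induction L with
  | nil => simp
  | cons g L ih =>
      rw [List.prod_cons, map_mul, E2_letter (hL g (by simp)),
        ih (fun g hg => hL g (by simp [hg])), ← ofAdd_add]
      congr 1
      push_cast [List.length_cons]
      ring

section Computations

variable (a b c : Fin N) (hab : a ≠ b) (hbc : b ≠ c) (hac : a ≠ c)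

lemma toAdd_mul_apply (f g : V N) (p : Fin N × Fin N) :
    toAdd ((f * g) p) = toAdd (f p) + toAdd (g p) := rfl

lemma toAdd_inv_apply (f : V N) (p : Fin N × Fin N) :
    toAdd ((f⁻¹) p) = -toAdd (f p) := rfl

lemma toAdd_dl_apply (p : Fin N × Fin N) :
    toAdd (dl a b p) = if p = (a, b) ∨ p = (b, a) then 1 else 0 := by
  rw [dl]; split <;> rfl

set_option maxHeartbeats 800000 in
include hab hbc hac in
lemma comp_u :
    (⟨dl a b, Equiv.swap a b⟩ : GG N) * ⟨dl b c, Equiv.swap b c⟩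
      * ⟨dl b c, Equiv.swap b c⟩ * ⟨dl a b, Equiv.swap a b⟩
    = ⟨dl a b * dl a c * dl c a * dl b a, 1⟩ := by
  have e1 : Equiv.swap a b b = a := Equiv.swap_apply_right a b
  have e2 : Equiv.swap a b c = c := Equiv.swap_apply_of_ne_of_ne (Ne.symm hac) (Ne.symm hbc)
  have e3 : Equiv.swap b c a = a := Equiv.swap_apply_of_ne_of_ne hab hac
  have e4 : Equiv.swap b c b = c := Equiv.swap_apply_left b c
  have e5 : Equiv.swap a b a = b := Equiv.swap_apply_left a b
  have e6 : Equiv.swap b c c = b := Equiv.swap_apply_right b c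
  refine SemidirectProduct.ext ?_ ?_
  · show dl a b * permAut N (Equiv.swap a b) (dl b c)
        * permAut N (Equiv.swap a b * Equiv.swap b c) (dl b c)
        * permAut N (Equiv.swap a b * Equiv.swap b c * Equiv.swap b c) (dl a b)
      = dl a b * dl a c * dl c a * dl b a
    simp only [map_mul, MulAut.mul_apply, permAut_dl, e1, e2, e3, e4, e5, e6]
  · show Equiv.swap a b * Equiv.swap b c * Equiv.swap b c * Equiv.swap a b = 1
    simp [mul_assoc]

set_option maxHeartbeats 800000 in
include hab hbc hac in
lemma comp_v :
    (⟨dl b c, Equiv.swap b c⟩ : GG N) * ⟨dl a b, Equiv.swap a b⟩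
      * ⟨dl a b, Equiv.swap a b⟩ * ⟨dl b c, Equiv.swap b c⟩
    = ⟨dl b c * dl a c * dl c a * dl c b, 1⟩ := by
  have e1 : Equiv.swap a b b = a := Equiv.swap_apply_right a b
  have e2 : Equiv.swap a b c = c := Equiv.swap_apply_of_ne_of_ne (Ne.symm hac) (Ne.symm hbc)
  have e3 : Equiv.swap b c a = a := Equiv.swap_apply_of_ne_of_ne hab hac
  have e4 : Equiv.swap b c b = c := Equiv.swap_apply_left b c
  have e5 : Equiv.swap a b a = b := Equiv.swap_apply_left a b
  have e6 : Equiv.swap b c c = b := Equiv.swap_apply_right b c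
  refine SemidirectProduct.ext ?_ ?_
  · show dl b c * permAut N (Equiv.swap b c) (dl a b)
        * permAut N (Equiv.swap b c * Equiv.swap a b) (dl a b)
        * permAut N (Equiv.swap b c * Equiv.swap a b * Equiv.swap a b) (dl b c)
      = dl b c * dl a c * dl c a * dl c b
    simp only [map_mul, MulAut.mul_apply, permAut_dl, e1, e2, e3, e4, e5, e6]
  · show Equiv.swap b c * Equiv.swap a b * Equiv.swap a b * Equiv.swap b c = 1
    simp [mul_assoc]

set_option maxHeartbeats 800000 in
include hab hbc hac in
lemma comp_x :
    (⟨dl b c, Equiv.swap b c⟩ : GG N) * ⟨dl b c, Equiv.swap b c⟩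
      * (⟨dl a b, Equiv.swap a b⟩ : GG N)⁻¹ * (⟨dl a b, Equiv.swap a b⟩ : GG N)⁻¹
    = ⟨dl b c * dl c b * (dl b a)⁻¹ * (dl a b)⁻¹, 1⟩ := by
  have e1 : Equiv.swap a b b = a := Equiv.swap_apply_right a b
  have e2 : Equiv.swap a b c = c := Equiv.swap_apply_of_ne_of_ne (Ne.symm hac) (Ne.symm hbc)
  have e3 : Equiv.swap b c a = a := Equiv.swap_apply_of_ne_of_ne hab hac
  have e4 : Equiv.swap b c b = c := Equiv.swap_apply_left b c
  have e5 : Equiv.swap a b a = b := Equiv.swap_apply_left a b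
  have e6 : Equiv.swap b c c = b := Equiv.swap_apply_right b c
  have hinv : (⟨dl a b, Equiv.swap a b⟩ : GG N)⁻¹
      = ⟨(dl b a)⁻¹, Equiv.swap a b⟩ := by
    refine SemidirectProduct.ext ?_ ?_
    · show permAut N (Equiv.swap a b)⁻¹ (dl a b)⁻¹ = (dl b a)⁻¹
      rw [Equiv.swap_inv, map_inv, permAut_dl, e5, e1]
    · show (Equiv.swap a b)⁻¹ = Equiv.swap a b
      exact Equiv.swap_inv a b
  rw [hinv]
  refine SemidirectProduct.ext ?_ ?_
  · show dl b c * permAut N (Equiv.swap b c) (dl b c)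
        * permAut N (Equiv.swap b c * Equiv.swap b c) (dl b a)⁻¹
        * permAut N (Equiv.swap b c * Equiv.swap b c * Equiv.swap a b) (dl b a)⁻¹
      = dl b c * dl c b * (dl b a)⁻¹ * (dl a b)⁻¹
    simp only [map_mul, MulAut.mul_apply, permAut_dl, map_inv, e1, e2, e3, e4, e5, e6]
  · show Equiv.swap b c * Equiv.swap b c * Equiv.swap a b * Equiv.swap a b = 1
    simp [mul_assoc]

end Computations

section Eval

variable {a b c : Fin N} (hab : a ≠ b) (hbc : b ≠ c) (hac : a ≠ c)

include hab hbc hac in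
lemma val_x_pt :
    val ((⟨dl b c, Equiv.swap b c⟩ : GG N) * ⟨dl b c, Equiv.swap b c⟩
      * (⟨dl a b, Equiv.swap a b⟩ : GG N)⁻¹ * (⟨dl a b, Equiv.swap a b⟩ : GG N)⁻¹)
      (b, c) = 2 := by
  rw [comp_x a b c hab hbc hac, val_mk, toAdd_mul_apply, toAdd_mul_apply, toAdd_mul_apply,
    toAdd_inv_apply, toAdd_inv_apply, toAdd_dl_apply, toAdd_dl_apply, toAdd_dl_apply,
    toAdd_dl_apply]
  rw [if_pos (Or.inl rfl), if_pos (Or.inr rfl)]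
  have hba : b ≠ a := Ne.symm hab
  have hcb : c ≠ b := Ne.symm hbc
  have hca : c ≠ a := Ne.symm hac
  rw [if_neg (by simp only [Prod.mk.injEq, not_or]; tauto),
    if_neg (by simp only [Prod.mk.injEq, not_or]; tauto)]
  norm_num

include hab hbc hac in
lemma val_u_pt (q : Fin N × Fin N) (h1 : q ≠ (a, b)) (h2 : q ≠ (b, a))
    (h3 : q ≠ (a, c)) (h4 : q ≠ (c, a)) :
    val ((⟨dl a b, Equiv.swap a b⟩ : GG N) * ⟨dl b c, Equiv.swap b c⟩
      * ⟨dl b c, Equiv.swap b c⟩ * ⟨dl a b, Equiv.swap a b⟩) q = 0 := by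
  rw [comp_u a b c hab hbc hac, val_mk, toAdd_mul_apply, toAdd_mul_apply, toAdd_mul_apply,
    toAdd_dl_apply, toAdd_dl_apply, toAdd_dl_apply, toAdd_dl_apply]
  have hba : b ≠ a := Ne.symm hab
  have hcb : c ≠ b := Ne.symm hbc
  have hca : c ≠ a := Ne.symm hac
  rw [if_neg (by tauto), if_neg (by tauto), if_neg (by tauto), if_neg (by tauto)]
  norm_num

include hab hbc hac in
lemma val_v_pt (q : Fin N × Fin N) (h1 : q ≠ (b, c)) (h2 : q ≠ (c, b))
    (h3 : q ≠ (a, c)) (h4 : q ≠ (c, a)) :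
    val ((⟨dl b c, Equiv.swap b c⟩ : GG N) * ⟨dl a b, Equiv.swap a b⟩
      * ⟨dl a b, Equiv.swap a b⟩ * ⟨dl b c, Equiv.swap b c⟩) q = 0 := by
  rw [comp_v a b c hab hbc hac, val_mk, toAdd_mul_apply, toAdd_mul_apply, toAdd_mul_apply,
    toAdd_dl_apply, toAdd_dl_apply, toAdd_dl_apply, toAdd_dl_apply]
  have hba : b ≠ a := Ne.symm hab
  have hcb : c ≠ b := Ne.symm hbc
  have hca : c ≠ a := Ne.symm hac
  rw [if_neg (by tauto), if_neg (by tauto), if_neg (by tauto), if_neg (by tauto)]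
  norm_num

end Eval

lemma braid_rel (i j : Fin (N - 1)) (hij : (i : ℕ) + 1 = (j : ℕ)) :
    (PresentedGroup.of i : BraidGroup N) * PresentedGroup.of j * PresentedGroup.of i
      = PresentedGroup.of j * PresentedGroup.of i * PresentedGroup.of j := by
  have hmem : (FreeGroup.of i * FreeGroup.of j * FreeGroup.of i
      * (FreeGroup.of j * FreeGroup.of i * FreeGroup.of j)⁻¹)
      ∈ Subgroup.normalClosure (braidRels N) :=
    Subgroup.subset_normalClosure (Or.inl ⟨i, j, hij, rfl⟩)
  have h1 : (QuotientGroup.mk (FreeGroup.of i * FreeGroup.of j * FreeGroup.of i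
      * (FreeGroup.of j * FreeGroup.of i * FreeGroup.of j)⁻¹) :
      PresentedGroup (braidRels N)) = 1 :=
    (QuotientGroup.eq_one_iff _).mpr hmem
  rw [QuotientGroup.mk_mul, QuotientGroup.mk_inv, QuotientGroup.mk_mul, QuotientGroup.mk_mul,
    QuotientGroup.mk_mul, mul_inv_eq_one] at h1
  exact h1

end BraidAux

namespace BraidAux

variable {N : ℕ}

lemma val_inv_gen {g : BraidGroup N} (hg : g⁻¹ ∈ artinGens N) (p : Fin N × Fin N) :
    val (ρ N g) p ≤ 0 := by
  have h : ρ N g = (ρ N g⁻¹)⁻¹ := by rw [← map_inv, inv_inv]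
  rw [h, val_inv]
  have := val_gen_nonneg hg
    ((ρ N g⁻¹).right p.1, (ρ N g⁻¹).right p.2)
  omega

lemma val_letter_le_one {g : BraidGroup N} (hg : g ∈ artinGens N ∨ g⁻¹ ∈ artinGens N)
    (p : Fin N × Fin N) : val (ρ N g) p ≤ 1 := by
  rcases hg with hg | hg
  · exact val_gen_le_one hg p
  · have := val_inv_gen hg p; omega

end BraidAux


set_option maxHeartbeats 2000000 in
open BraidAux Multiplicative in
/-- In the Artin presentation of `B_N` (`N ≥ 3`), the element
`x = σ₂² σ₁⁻²` has minimal Artin word length `ℓ(x) = 4` and rational Artin length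
`ℓ_R(x) = 8`; in particular `ℓ_R(x) = 2·ℓ(x)`. -/
theorem rational_length_of_sigma2sq_sigma1_negsq (N : ℕ) (hN : 3 ≤ N)
    (M : Submonoid (BraidGroup N)) (hM : M = Submonoid.closure (artinGens N))
    (wedge : BraidGroup N → BraidGroup N → BraidGroup N) (ℓR : BraidGroup N → ℕ)
    -- `wedge` is the left gcd on positive braids
    (hwedge : ∀ a ∈ M, ∀ b ∈ M, wedge a b ∈ M ∧
      (∃ c ∈ M, wedge a b * c = a) ∧ (∃ c ∈ M, wedge a b * c = b) ∧
      ∀ d ∈ M, (∃ c ∈ M, d * c = a) → (∃ c ∈ M, d * c = b) →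
        ∃ c ∈ M, d * c = wedge a b)
    -- the rational length is computed from the rational normal form `y = u⁻¹ v`
    (hR : ∀ y : BraidGroup N, ∀ u ∈ M, ∀ v ∈ M, wedge u v = 1 → y = u⁻¹ * v →
      ℓR y = posLen (artinGens N) u + posLen (artinGens N) v) :
    minLen (artinGens N) (sigma N 2 ^ 2 * (sigma N 1)⁻¹ ^ 2) = 4 ∧
    ℓR (sigma N 2 ^ 2 * (sigma N 1)⁻¹ ^ 2) = 8 ∧
    ℓR (sigma N 2 ^ 2 * (sigma N 1)⁻¹ ^ 2) =
      2 * minLen (artinGens N) (sigma N 2 ^ 2 * (sigma N 1)⁻¹ ^ 2) := by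
  have h12 : (1 : ℕ) ≤ N - 1 := by omega
  have h22 : (2 : ℕ) ≤ N - 1 := by omega
  have h11 : (1 : ℕ) ≤ 1 := le_refl 1
  have h21 : (1 : ℕ) ≤ 2 := by omega
  set s1 := sigma N 1 with hs1
  set s2 := sigma N 2 with hs2
  set x := s2 ^ 2 * s1⁻¹ ^ 2 with hxdef
  set A := artinGens N with hA
  set u := s1 * s2 * s2 * s1 with hudef
  set v := s2 * s1 * s1 * s2 with hvdef
  -- Artin generator membership
  have hs1A : s1 ∈ A := ⟨1, h11, h12, rfl⟩
  have hs2A : s2 ∈ A := ⟨1 + 1, h21, h22, rfl⟩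
  -- distinguished strands
  set A0 : Fin N := ⟨0, by omega⟩ with hA0
  set A1 : Fin N := ⟨1, by omega⟩ with hA1
  set A2 : Fin N := ⟨2, by omega⟩ with hA2
  have hA0v : (A0 : ℕ) = 0 := rfl
  have hA1v : (A1 : ℕ) = 1 := rfl
  have hA2v : (A2 : ℕ) = 2 := rfl
  have hab : A0 ≠ A1 := by simp [hA0, hA1, Fin.ext_iff]
  have hbc : A1 ≠ A2 := by simp [hA1, hA2, Fin.ext_iff]
  have hac : A0 ≠ A2 := by simp [hA0, hA2, Fin.ext_iff]
  -- representation values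
  have hρ1 : ρ N s1 = ⟨dl A0 A1, Equiv.swap A0 A1⟩ := by
    rw [hs1, ρ_sigma h11 h12]
  have hρ2 : ρ N s2 = ⟨dl A1 A2, Equiv.swap A1 A2⟩ := by
    rw [hs2, ρ_sigma h21 h22]
  have hρu : ρ N u = (⟨dl A0 A1, Equiv.swap A0 A1⟩ : GG N) * ⟨dl A1 A2, Equiv.swap A1 A2⟩
      * ⟨dl A1 A2, Equiv.swap A1 A2⟩ * ⟨dl A0 A1, Equiv.swap A0 A1⟩ := by
    rw [hudef, map_mul, map_mul, map_mul, hρ1, hρ2]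
  have hρv : ρ N v = (⟨dl A1 A2, Equiv.swap A1 A2⟩ : GG N) * ⟨dl A0 A1, Equiv.swap A0 A1⟩
      * ⟨dl A0 A1, Equiv.swap A0 A1⟩ * ⟨dl A1 A2, Equiv.swap A1 A2⟩ := by
    rw [hvdef, map_mul, map_mul, map_mul, hρ1, hρ2]
  have hρx : ρ N x = (⟨dl A1 A2, Equiv.swap A1 A2⟩ : GG N) * ⟨dl A1 A2, Equiv.swap A1 A2⟩
      * (⟨dl A0 A1, Equiv.swap A0 A1⟩ : GG N)⁻¹ * (⟨dl A0 A1, Equiv.swap A0 A1⟩ : GG N)⁻¹ := by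
    have : x = s2 * s2 * s1⁻¹ * s1⁻¹ := by rw [hxdef, pow_two, pow_two]; group
    rw [this, map_mul, map_mul, map_mul, map_inv, hρ1, hρ2]
  have hvalx : val (ρ N x) (A1, A2) = 2 := by
    rw [hρx]; exact val_x_pt hab hbc hac
  -- exponent sums
  have hEx : E N x = 1 := by
    rw [hxdef, map_mul, map_pow, map_pow, map_inv, hs1, hs2, E_sigma h11 h12, E_sigma h21 h22]
    group
  have hE2x : E2 N x = 1 := by
    rw [hxdef, map_mul, map_pow, map_pow, map_inv, hs1, hs2, E2_sigma h11 h12, E2_sigma h21 h22]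
    group
  have hEu : E N u = ofAdd (4 : ℤ) := by
    rw [hudef, map_mul, map_mul, map_mul, hs1, hs2, E_sigma h11 h12, E_sigma h21 h22,
      ← ofAdd_add, ← ofAdd_add, ← ofAdd_add]
    norm_num
  have hEv : E N v = ofAdd (4 : ℤ) := by
    rw [hvdef, map_mul, map_mul, map_mul, hs1, hs2, E_sigma h11 h12, E_sigma h21 h22,
      ← ofAdd_add, ← ofAdd_add, ← ofAdd_add]
    norm_num
  -- the braid relation
  have brel : s1 * s2 * s1 = s2 * s1 * s2 := by
    rw [hs1, hs2, sigma_eq h11 h12, sigma_eq h21 h22]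
    exact braid_rel _ _ (by norm_num)
  -- the key identity u * x = v
  have core : s1 * s2 * s2 * s1 * s2 * s2 = s2 * s1 * s1 * s2 * s1 * s1 := by
    calc s1 * s2 * s2 * s1 * s2 * s2 = s1 * s2 * (s2 * s1 * s2) * s2 := by
          simp only [mul_assoc]
      _ = s1 * s2 * (s1 * s2 * s1) * s2 := by rw [← brel]
      _ = (s1 * s2 * s1) * (s2 * s1 * s2) := by simp only [mul_assoc]
      _ = (s1 * s2 * s1) * (s1 * s2 * s1) := by rw [← brel]
      _ = (s2 * s1 * s2) * (s1 * s2 * s1) := by rw [brel]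
      _ = s2 * s1 * (s2 * s1 * s2) * s1 := by simp only [mul_assoc]
      _ = s2 * s1 * (s1 * s2 * s1) * s1 := by rw [← brel]
      _ = s2 * s1 * s1 * s2 * s1 * s1 := by simp only [mul_assoc]
  have key : u * x = v := by
    calc u * x = (s1 * s2 * s2 * s1 * s2 * s2) * (s1⁻¹ * s1⁻¹) := by
          rw [hudef, hxdef, pow_two, pow_two]; group
      _ = (s2 * s1 * s1 * s2 * s1 * s1) * (s1⁻¹ * s1⁻¹) := by rw [core]
      _ = v := by rw [hvdef]; group
  have hx : x = u⁻¹ * v := by rw [← key]; group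
  -- membership in the positive monoid
  have huM : u ∈ M := by
    rw [hM, hudef]
    exact mul_mem (mul_mem (mul_mem (Submonoid.subset_closure hs1A)
      (Submonoid.subset_closure hs2A)) (Submonoid.subset_closure hs2A))
      (Submonoid.subset_closure hs1A)
  have hvM : v ∈ M := by
    rw [hM, hvdef]
    exact mul_mem (mul_mem (mul_mem (Submonoid.subset_closure hs2A)
      (Submonoid.subset_closure hs1A)) (Submonoid.subset_closure hs1A))
      (Submonoid.subset_closure hs2A)
  -- positive lengths
  have hposLen : ∀ w : BraidGroup N, E N w = ofAdd (4 : ℤ) →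
      (∃ L : List (BraidGroup N), (∀ g ∈ L, g ∈ A) ∧ L.prod = w ∧ L.length = 4) →
      posLen A w = 4 := by
    intro w hEw ⟨L4, hL4⟩
    have hmem4 : 4 ∈ {n | ∃ L : List (BraidGroup N), (∀ g ∈ L, g ∈ A) ∧ L.prod = w ∧
        L.length = n} := ⟨L4, hL4⟩
    refine le_antisymm (Nat.sInf_le hmem4) (le_csInf ⟨4, hmem4⟩ ?_)
    rintro n ⟨L, hLA, hLp, hLl⟩
    have := E_list L hLA
    rw [hLp, hEw] at this
    have h4 : ((4 : ℤ)) = (L.length : ℤ) := by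
      simpa using congrArg Multiplicative.toAdd this
    omega
  have hpu : posLen A u = 4 := by
    refine hposLen u hEu ⟨[s1, s2, s2, s1], ?_, ?_, rfl⟩
    · intro g hg
      simp only [List.mem_cons, List.mem_singleton, List.not_mem_nil, or_false] at hg
      rcases hg with rfl | rfl | rfl | rfl <;> assumption
    · rw [hudef]; simp [mul_assoc]
  have hpv : posLen A v = 4 := by
    refine hposLen v hEv ⟨[s2, s1, s1, s2], ?_, ?_, rfl⟩
    · intro g hg
      simp only [List.mem_cons, List.mem_singleton, List.not_mem_nil, or_false] at hg
      rcases hg with rfl | rfl | rfl | rfl <;> assumption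
    · rw [hvdef]; simp [mul_assoc]
  -- the gcd of u and v is trivial
  have hwuv : wedge u v = 1 := by
    obtain ⟨hdM, ⟨c, hcM, hcu⟩, ⟨c', hc'M, hcv⟩, -⟩ := hwedge u huM v hvM
    obtain ⟨Ld, hLd, hLdprod⟩ := Submonoid.exists_list_of_mem_closure (hM ▸ hdM)
    match Ld, hLd, hLdprod with
    | [], _, hLdprod => rw [← hLdprod, List.prod_nil]
    | g :: Ls, hLd, hLdprod =>
      exfalso
      obtain ⟨i, hi1, hi2, rfl⟩ := hLd g (by simp)
      have hLsA : ∀ y ∈ Ls, y ∈ Submonoid.closure A :=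
        fun y hy => Submonoid.subset_closure (hLd y (by simp [hy]))
      have hmem1 : Ls.prod * c ∈ Submonoid.closure A :=
        mul_mem (Submonoid.list_prod_mem _ hLsA) (hM ▸ hcM)
      have hmem2 : Ls.prod * c' ∈ Submonoid.closure A :=
        mul_mem (Submonoid.list_prod_mem _ hLsA) (hM ▸ hc'M)
      have hu' : u = sigma N i * (Ls.prod * c) := by
        rw [← hcu, ← hLdprod, List.prod_cons, mul_assoc]
      have hv' : v = sigma N i * (Ls.prod * c') := by
        rw [← hcv, ← hLdprod, List.prod_cons, mul_assoc]
      by_cases hi : i = 1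
      · subst hi
        have h2 := val_leading hi1 hi2 hmem2 A0 A1 (by simp [hA0]) (by simp [hA1])
        rw [← hv'] at h2
        have hz : val (ρ N v) (A0, A1) = 0 := by
          rw [hρv]
          refine val_v_pt hab hbc hac _ ?_ ?_ ?_ ?_ <;>
            simp only [ne_eq, Prod.ext_iff, Fin.ext_iff, hA0v, hA1v, hA2v, not_and] <;> omega
        omega
      · obtain ⟨q1, hq1⟩ : ∃ q : Fin N, (q : ℕ) = i - 1 := ⟨⟨i - 1, by omega⟩, rfl⟩
        obtain ⟨q2, hq2⟩ : ∃ q : Fin N, (q : ℕ) = i := ⟨⟨i, by omega⟩, rfl⟩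
        have h1 := val_leading hi1 hi2 hmem1 q1 q2 hq1 hq2
        rw [← hu'] at h1
        have hz : val (ρ N u) (q1, q2) = 0 := by
          rw [hρu]
          refine val_u_pt hab hbc hac _ ?_ ?_ ?_ ?_ <;>
            simp only [ne_eq, Prod.ext_iff, Fin.ext_iff, hq1, hq2, hA0v, hA1v, hA2v,
              not_and] <;> omega
        omega
  -- minimal word length
  have hminLen : minLen A x = 4 := by
    have hmem4 : 4 ∈ {n | ∃ L : List (BraidGroup N), (∀ g ∈ L, g ∈ A ∨ g⁻¹ ∈ A) ∧
        L.prod = x ∧ L.length = n} := by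
      refine ⟨[s2, s2, s1⁻¹, s1⁻¹], ?_, ?_, rfl⟩
      · intro g hg
        simp only [List.mem_cons, List.mem_singleton, List.not_mem_nil, or_false] at hg
        rcases hg with rfl | rfl | rfl | rfl
        · exact Or.inl hs2A
        · exact Or.inl hs2A
        · exact Or.inr (by rw [inv_inv]; exact hs1A)
        · exact Or.inr (by rw [inv_inv]; exact hs1A)
      · rw [hxdef, pow_two, pow_two]; simp [mul_assoc]
    refine le_antisymm (Nat.sInf_le hmem4) (le_csInf ⟨4, hmem4⟩ ?_)
    rintro n ⟨L, hLA, hLp, hLl⟩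
    by_contra hlt
    push_neg at hlt
    -- parity
    have hpar := E2_list L hLA
    rw [hLp, hE2x] at hpar
    have hpar' : ((L.length : ZMod 2)) = 0 := by
      simpa using (congrArg Multiplicative.toAdd hpar).symm
    -- n ≠ 0
    have hn0 : n ≠ 0 := by
      rintro rfl
      rw [List.length_eq_zero_iff] at hLl
      rw [hLl, List.prod_nil] at hLp
      rw [← hLp] at hvalx
      simp [val_one] at hvalx
    -- n ≠ 2
    have hn2 : n ≠ 2 := by
      rintro rfl
      obtain ⟨g, h, rfl⟩ := List.length_eq_two.mp hLl
      have hg := hLA g (by simp)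
      have hh := hLA h (by simp)
      have hgh : g * h = x := by rw [← hLp]; simp
      have hsplit : val (ρ N (g * h)) (A1, A2) = val (ρ N g) (A1, A2)
          + val (ρ N h) ((ρ N g).right⁻¹ A1, (ρ N g).right⁻¹ A2) := by
        rw [map_mul, val_mul]
      rw [hgh, hvalx] at hsplit
      rcases hg with hgA | hgI
      · rcases hh with hhA | hhI
        · -- both positive: exponent sum 2 ≠ 0
          obtain ⟨i, hi1, hi2, rfl⟩ := hgA
          obtain ⟨j, hj1, hj2, rfl⟩ := hhA
          have : E N x = ofAdd (2 : ℤ) := by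
            rw [← hgh, map_mul, E_sigma hi1 hi2, E_sigma hj1 hj2, ← ofAdd_add]
            norm_num
          rw [hEx] at this
          have := congrArg Multiplicative.toAdd this
          simpa using this
        · have b1 := val_gen_le_one hgA (A1, A2)
          have b2 := val_inv_gen hhI ((ρ N g).right⁻¹ A1, (ρ N g).right⁻¹ A2)
          omega
      · have b1 := val_inv_gen hgI (A1, A2)
        have b2 := val_letter_le_one hh ((ρ N g).right⁻¹ A1, (ρ N g).right⁻¹ A2)
        omega
    rw [hLl] at hpar'
    have hn13 : n = 1 ∨ n = 3 := by omega
    rcases hn13 with rfl | rfl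
    · exact absurd hpar' (by decide)
    · exact absurd hpar' (by decide)
  refine ⟨hminLen, ?_, ?_⟩
  · rw [hR x u huM v hvM hwuv hx, hpu, hpv]
  · rw [hR x u huM v hvM hwuv hx, hpu, hpv, hminLen]
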